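/- Let α > 1 and p > 1 satisfy (α−1)(p−1) < 1, fix r > 0, d ∈ (0,1) and ε > 0, and for n ∈ ℕ set ν_n := d·∑_{j=n+1}^∞ 1/(r·j^p). Let R be a nonnegative random variable with P(R ≥ x) ≥ x^{−(α−1)} for all x ≥ 1. Then ∑_{n=2}^∞ E[∏_{j=1}^∞ (R·j^p)/(R·j^p + (1+ε)·ν_n^{−1}·log n)] = ∞, where the infinite product inside the expectation is the limit of the partial products (each factor lies in [0,1), so the limit exists in [0,1]). -/

import Mathlib

open MeasureTheory ProbabilityTheory Filter

private lemma exp_bound_aux {x : ℝ} (h0 : 0 ≤ x) (h2 : x ≤ 1/2) :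
    Real.exp (-(2*x)) ≤ 1 - x := by
  have h1 : (0:ℝ) < 1 + 2*x := by linarith
  have he : 1 + 2*x ≤ Real.exp (2*x) := by
    have := Real.add_one_le_exp (2*x); linarith
  have hinv : (Real.exp (2*x))⁻¹ ≤ (1 + 2*x)⁻¹ := inv_anti₀ h1 he
  have h3 : (1 + 2*x)⁻¹ ≤ 1 - x := by
    rw [inv_eq_one_div, div_le_iff₀ h1]; nlinarith
  calc Real.exp (-(2*x)) = (Real.exp (2*x))⁻¹ := by rw [Real.exp_neg]
    _ ≤ (1+2*x)⁻¹ := hinv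
    _ ≤ 1 - x := h3

theorem stmt_19
    {Ω : Type*} [MeasureSpace Ω] [IsProbabilityMeasure (ℙ : Measure Ω)]
    (α p : ℝ) (hα : 1 < α) (hp : 1 < p) (hcond : (α - 1) * (p - 1) < 1)
    (r d ε : ℝ) (hr : 0 < r) (hd0 : 0 < d) (hd1 : d < 1) (hε : 0 < ε)
    (ν : ℕ → ℝ)
    (hν : ∀ n : ℕ, ν n = d * ∑' j : ℕ, 1 / (r * ((n + 1 + j : ℕ) : ℝ) ^ p))
    (R : Ω → ℝ) (hRmeas : Measurable R) (hRnonneg : ∀ ω, 0 ≤ R ω)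
    (htail : ∀ x : ℝ, 1 ≤ x → x ^ (-(α - 1)) ≤ (ℙ {ω | x ≤ R ω}).toReal) :
    ∑' n : ℕ, ∫⁻ ω,
        ENNReal.ofReal (⨅ N : ℕ, ∏ j ∈ Finset.range N,
          R ω * ((j + 1 : ℕ) : ℝ) ^ p /
            (R ω * ((j + 1 : ℕ) : ℝ) ^ p + (1 + ε) * (ν (n + 2))⁻¹ * Real.log (n + 2)))
        ∂ℙ = ⊤ := by
  have hβ : 0 < α - 1 := by linarith
  have hp0 : 0 ≤ p := by linarith
  -- summability of 1/(j+1)^p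
  have hsum1 : Summable (fun j : ℕ => 1 / ((j:ℝ)+1) ^ p) := by
    have h := (summable_nat_add_iff 1).mpr (Real.summable_one_div_nat_rpow.mpr hp)
    refine h.congr fun j => ?_
    push_cast; ring_nf
  set Sp := ∑' j : ℕ, 1 / ((j:ℝ)+1) ^ p with hSpdef
  set c := Real.exp (-(2 * Sp)) with hcdef
  have hc0 : 0 < c := Real.exp_pos _
  -- choice of s and q
  set s : ℝ := (1 - (α-1)*(p-1)) / (2*(α-1)) with hsdef
  have hs0 : 0 < s := by
    apply div_pos (by linarith) (by linarith)
  set q : ℝ := (α-1) * (p-1+s) with hqdef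
  have hq1 : q < 1 := by
    have : (α-1) * s = (1 - (α-1)*(p-1))/2 := by
      rw [hsdef]; field_simp
    have hq : q = (α-1)*(p-1) + (α-1)*s := by rw [hqdef]; ring
    rw [hq, this]; linarith
  have hq0 : 0 < q := by
    apply mul_pos hβ (by linarith)
  -- summability of the tail sums defining ν
  have hsumm : ∀ m : ℕ, Summable (fun j : ℕ => 1 / (r * ((m + 1 + j : ℕ) : ℝ) ^ p)) := by
    intro m
    have h := (summable_nat_add_iff (m+1)).mpr (Real.summable_one_div_nat_rpow.mpr hp)
    have h2 := h.mul_left r⁻¹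
    refine h2.congr fun j => ?_
    have hc : ((m+1+j : ℕ):ℝ) = ((j + (m+1) : ℕ):ℝ) := by push_cast; ring
    rw [hc, one_div, one_div, mul_inv]
  have htermpos : ∀ m j : ℕ, (0:ℝ) < 1 / (r * ((m + 1 + j : ℕ) : ℝ) ^ p) := by
    intro m j
    have h1 : (0:ℝ) < ((m+1+j : ℕ):ℝ) := by positivity
    positivity
  have hνpos : ∀ m : ℕ, 0 < ν m := by
    intro m
    rw [hν]
    exact mul_pos hd0 (Summable.tsum_pos (hsumm m) (fun j => (htermpos m j).le) 0 (htermpos m 0))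
  -- lower bound on ν
  have hνlb : ∀ m : ℕ, 1 ≤ m → d * ((m:ℝ) * (1 / (r * 3^p * (m:ℝ)^p))) ≤ ν m := by
    intro m hm
    have hm0 : (0:ℝ) < m := by exact_mod_cast hm
    rw [hν]
    apply mul_le_mul_of_nonneg_left _ hd0.le
    have hsums := Summable.sum_le_tsum (Finset.range m)
      (fun j _ => (htermpos m j).le) (hsumm m)
    refine le_trans ?_ hsums
    have hterm : ∀ j ∈ Finset.range m,
        (1:ℝ)/(r * 3^p * (m:ℝ)^p) ≤ 1 / (r * ((m+1+j:ℕ):ℝ)^p) := by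
      intro j hj
      have hjm : j < m := Finset.mem_range.mp hj
      have hcast : ((m+1+j:ℕ):ℝ) ≤ 3*(m:ℝ) := by
        have h1 : m+1+j ≤ 3*m := by omega
        calc ((m+1+j:ℕ):ℝ) ≤ ((3*m:ℕ):ℝ) := Nat.cast_le.mpr h1
          _ = 3*(m:ℝ) := by push_cast; ring
      have hrp := Real.rpow_le_rpow (by positivity) hcast hp0
      have h3 : ((3:ℝ)*(m:ℝ))^p = 3^p * (m:ℝ)^p :=
        Real.mul_rpow (by norm_num) (by positivity)
      apply one_div_le_one_div_of_le
      · have h1 : (0:ℝ) < ((m+1+j : ℕ):ℝ) := by positivity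
        positivity
      · calc r * ((m+1+j:ℕ):ℝ)^p ≤ r * ((3:ℝ)*(m:ℝ))^p :=
              mul_le_mul_of_nonneg_left hrp hr.le
          _ = r * 3^p * (m:ℝ)^p := by rw [h3]; ring
    calc (m:ℝ) * (1 / (r * 3^p * (m:ℝ)^p))
        = ∑ j ∈ Finset.range m, (1:ℝ)/(r * 3^p * (m:ℝ)^p) := by
          simp [Finset.sum_const, nsmul_eq_mul]
      _ ≤ ∑ j ∈ Finset.range m, 1 / (r * ((m+1+j:ℕ):ℝ)^p) :=
          Finset.sum_le_sum hterm
  -- upper bound on (ν m)⁻¹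
  set K : ℝ := r * 3^p / d with hKdef
  have hK0 : 0 < K := by
    have : (0:ℝ) < 3^p := Real.rpow_pos_of_pos (by norm_num) p
    positivity
  have hνinv : ∀ m : ℕ, 1 ≤ m → (ν m)⁻¹ ≤ K * (m:ℝ)^(p-1) := by
    intro m hm
    have hm0 : (0:ℝ) < m := by exact_mod_cast hm
    have h3p : (0:ℝ) < 3^p := Real.rpow_pos_of_pos (by norm_num) p
    have hmp : (0:ℝ) < (m:ℝ)^p := Real.rpow_pos_of_pos hm0 p
    have heq : d * ((m:ℝ) * (1 / (r * 3^p * (m:ℝ)^p))) = (K * (m:ℝ)^(p-1))⁻¹ := by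
      rw [hKdef, Real.rpow_sub hm0, Real.rpow_one]
      field_simp
    have hB : (0:ℝ) < K * (m:ℝ)^(p-1) :=
      mul_pos hK0 (Real.rpow_pos_of_pos hm0 _)
    have h1 : (K * (m:ℝ)^(p-1))⁻¹ ≤ ν m := heq ▸ hνlb m hm
    calc (ν m)⁻¹ ≤ ((K * (m:ℝ)^(p-1))⁻¹)⁻¹ := inv_anti₀ (by positivity) h1
      _ = K * (m:ℝ)^(p-1) := inv_inv _
  -- L and T
  set L : ℕ → ℝ := fun n => (1+ε) * (ν (n+2))⁻¹ * Real.log ((n:ℝ)+2) with hLdef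
  set T : ℕ → ℝ := fun n => max 1 (L n) with hTdef
  have hlog0 : ∀ n : ℕ, 0 ≤ Real.log ((n:ℝ)+2) := by
    intro n
    apply Real.log_nonneg; push_cast; linarith [Nat.cast_nonneg (α := ℝ) n]
  have hL0 : ∀ n, 0 ≤ L n := by
    intro n
    have := (hνpos (n+2)).le
    have h1 : (0:ℝ) ≤ (ν (n+2))⁻¹ := inv_nonneg.mpr this
    have := hlog0 n
    positivity
  have hT1 : ∀ n, 1 ≤ T n := fun n => le_max_left _ _
  have hTL : ∀ n, L n ≤ T n := fun n => le_max_right _ _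
  have hT0 : ∀ n, 0 < T n := fun n => lt_of_lt_of_le one_pos (hT1 n)
  -- upper bound on T
  set M : ℝ := 1/Real.log 2 + (1+ε)*K with hMdef
  have hlog2 : 0 < Real.log 2 := Real.log_pos (by norm_num)
  have hM0 : 0 < M := by positivity
  have hTub : ∀ n : ℕ, T n ≤ (M/s) * ((n:ℝ)+2)^(p-1+s) := by
    intro n
    have hx2 : (2:ℝ) ≤ (n:ℝ)+2 := by linarith [Nat.cast_nonneg (α := ℝ) n]
    have hx0 : (0:ℝ) < (n:ℝ)+2 := by linarith
    have hx1 : (1:ℝ) ≤ (n:ℝ)+2 := by linarith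
    have hrp1 : (1:ℝ) ≤ ((n:ℝ)+2)^(p-1) := Real.one_le_rpow hx1 (by linarith)
    have hlogn : Real.log 2 ≤ Real.log ((n:ℝ)+2) := Real.log_le_log (by norm_num) hx2
    -- T n ≤ M * x^(p-1) * log x
    have hTM : T n ≤ M * ((n:ℝ)+2)^(p-1) * Real.log ((n:ℝ)+2) := by
      apply max_le
      · have hAB : Real.log 2 ≤ ((n:ℝ)+2)^(p-1) * Real.log ((n:ℝ)+2) := by
          nlinarith [hlog0 n]
        have hM' : 1/Real.log 2 ≤ M := by
          have hKe : 0 < (1+ε)*K := by positivity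
          rw [hMdef]; linarith
        have hd2 : (0:ℝ) < 1/Real.log 2 := by positivity
        have h5 := mul_le_mul hM' hAB hlog2.le (le_trans hd2.le hM')
        rw [one_div, inv_mul_cancel₀ hlog2.ne'] at h5
        calc (1:ℝ) ≤ M * (((n:ℝ)+2)^(p-1) * Real.log ((n:ℝ)+2)) := h5
          _ = M * ((n:ℝ)+2)^(p-1) * Real.log ((n:ℝ)+2) := by ring
      · have hcast : ((n+2:ℕ):ℝ) = (n:ℝ)+2 := by push_cast; ring
        have h1 := hνinv (n+2) (by omega)
        rw [hcast] at h1
        calc L n ≤ (1+ε) * (K * ((n:ℝ)+2)^(p-1)) * Real.log ((n:ℝ)+2) := by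
              apply mul_le_mul_of_nonneg_right _ (hlog0 n)
              exact mul_le_mul_of_nonneg_left h1 (by linarith)
          _ ≤ M * ((n:ℝ)+2)^(p-1) * Real.log ((n:ℝ)+2) := by
              apply mul_le_mul_of_nonneg_right _ (hlog0 n)
              have he : (1+ε)*(K*((n:ℝ)+2)^(p-1)) = ((1+ε)*K)*((n:ℝ)+2)^(p-1) := by ring
              rw [he]
              apply mul_le_mul_of_nonneg_right _ (by positivity)
              have hd2 : (0:ℝ) < 1/Real.log 2 := by positivity
              rw [hMdef]; linarith
    -- log x ≤ x^s / s
    have hlogle : Real.log ((n:ℝ)+2) ≤ ((n:ℝ)+2)^s / s := by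
      have h1 := Real.log_le_sub_one_of_pos (Real.rpow_pos_of_pos hx0 s)
      rw [Real.log_rpow hx0] at h1
      rw [div_eq_inv_mul, ← mul_le_mul_iff_right₀ hs0, ← mul_assoc, mul_inv_cancel₀ hs0.ne',
        one_mul]
      linarith [Real.rpow_pos_of_pos hx0 s]
    calc T n ≤ M * ((n:ℝ)+2)^(p-1) * Real.log ((n:ℝ)+2) := hTM
      _ ≤ M * ((n:ℝ)+2)^(p-1) * (((n:ℝ)+2)^s / s) := by
          apply mul_le_mul_of_nonneg_left hlogle (by positivity)
      _ = (M/s) * (((n:ℝ)+2)^(p-1) * ((n:ℝ)+2)^s) := by ring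
      _ = (M/s) * ((n:ℝ)+2)^(p-1+s) := by rw [← Real.rpow_add hx0]
  -- lower bound on T^{-(α-1)}
  have hTlb : ∀ n : ℕ, (M/s)^(-(α-1)) * ((n:ℝ)+2)^(-q) ≤ (T n)^(-(α-1)) := by
    intro n
    have hx0 : (0:ℝ) < (n:ℝ)+2 := by positivity
    have h1 := Real.rpow_le_rpow_of_nonpos (hT0 n) (hTub n) (by linarith : -(α-1) ≤ 0)
    calc (M/s)^(-(α-1)) * ((n:ℝ)+2)^(-q)
        = ((M/s) * ((n:ℝ)+2)^(p-1+s))^(-(α-1)) := by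
          rw [Real.mul_rpow (by positivity) (by positivity),
            ← Real.rpow_mul hx0.le]
          congr 2
          rw [hqdef]; ring
      _ ≤ (T n)^(-(α-1)) := h1
  -- divergence of the lower-bound series
  have hdiv : ¬ Summable (fun n : ℕ => c * (T n)^(-(α-1))) := by
    intro hsummab
    have hb0 : (0:ℝ) < c * (M/s)^(-(α-1)) := by positivity
    have h1 : Summable (fun n : ℕ => (c * (M/s)^(-(α-1))) * ((n:ℝ)+2)^(-q)) := by
      apply Summable.of_nonneg_of_le (fun n => by positivity) _ hsummab
      intro n
      calc (c * (M/s)^(-(α-1))) * ((n:ℝ)+2)^(-q)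
          = c * ((M/s)^(-(α-1)) * ((n:ℝ)+2)^(-q)) := by ring
        _ ≤ c * (T n)^(-(α-1)) := mul_le_mul_of_nonneg_left (hTlb n) hc0.le
    have h2 : Summable (fun n : ℕ => ((n:ℝ)+2)^(-q)) :=
      (summable_mul_left_iff hb0.ne').mp h1
    have h3 : Summable (fun n : ℕ => ((n:ℕ):ℝ)^(-q)) := by
      apply (summable_nat_add_iff 2).mp
      refine h2.congr fun n => ?_
      push_cast; ring_nf
    have h4 := Real.summable_nat_rpow.mp h3
    linarith
  -- per-ω lower bound on the infinite product
  have hωbound : ∀ n : ℕ, ∀ ω : Ω, T n ≤ R ω →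
      c ≤ ⨅ N : ℕ, ∏ j ∈ Finset.range N,
        R ω * ((j + 1 : ℕ) : ℝ) ^ p /
          (R ω * ((j + 1 : ℕ) : ℝ) ^ p + (1 + ε) * (ν (n+2))⁻¹ * Real.log ((n:ℝ) + 2)) := by
    intro n ω hωT
    apply le_ciInf
    intro N
    set x := R ω with hxdef
    have hx1 : 1 ≤ x := le_trans (hT1 n) hωT
    have hx0 : 0 < x := lt_of_lt_of_le one_pos hx1
    have hLx : L n ≤ x := le_trans (hTL n) hωT
    have factor : ∀ j : ℕ, Real.exp (-(2 * (1/((j:ℝ)+1)^p))) ≤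
        x * ((j+1:ℕ):ℝ)^p / (x * ((j+1:ℕ):ℝ)^p + (1 + ε) * (ν (n+2))⁻¹ * Real.log ((n:ℝ)+2)) := by
      intro j
      have hcastj : ((j+1:ℕ):ℝ) = (j:ℝ)+1 := by push_cast; ring
      set J : ℝ := ((j:ℝ)+1)^p with hJdef
      have hJ1 : 1 ≤ J := Real.one_le_rpow (by linarith [Nat.cast_nonneg (α := ℝ) j]) hp0
      have hJ0 : 0 < J := lt_of_lt_of_le one_pos hJ1
      have step1 : Real.exp (-(2 * (1/(J+1)))) ≤ J/(J+1) := by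
        have h := exp_bound_aux (x := 1/(J+1)) (one_div_nonneg.mpr (by linarith))
          (by rw [div_le_div_iff₀ (by linarith) (by norm_num)]; linarith)
        calc Real.exp (-(2 * (1/(J+1)))) ≤ 1 - 1/(J+1) := h
          _ = J/(J+1) := by field_simp; ring
      have step0 : Real.exp (-(2 * (1/((j:ℝ)+1)^p))) ≤ Real.exp (-(2 * (1/(J+1)))) := by
        apply Real.exp_le_exp.mpr
        have : 1/(J+1) ≤ 1/J := one_div_le_one_div_of_le hJ0 (by linarith)
        rw [← hJdef]
        linarith
      have step2 : J/(J+1) ≤ x * J / (x * J + (1 + ε) * (ν (n+2))⁻¹ * Real.log ((n:ℝ)+2)) := by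
        have hLn : (1 + ε) * (ν (n+2))⁻¹ * Real.log ((n:ℝ)+2) = L n := rfl
        rw [hLn]
        have hden : 0 < x * J + L n := by
          have := hL0 n; positivity
        calc J/(J+1) = x*J/(x*(J+1)) := by
              rw [mul_div_mul_left _ _ hx0.ne']
          _ = x*J/(x*J + x) := by ring_nf
          _ ≤ x*J/(x*J + L n) := by
              apply div_le_div_of_nonneg_left (by positivity) hden
              linarith
      rw [hcastj]
      rw [← hJdef]
      exact le_trans step0 (le_trans step1 step2)
    calc c = Real.exp (-(2 * Sp)) := rfl
      _ ≤ Real.exp (∑ j ∈ Finset.range N, -(2 * (1/((j:ℝ)+1)^p))) := by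
          apply Real.exp_le_exp.mpr
          have hps := Summable.sum_le_tsum (Finset.range N)
            (fun j _ => by positivity : ∀ j ∉ Finset.range N, (0:ℝ) ≤ 1/((j:ℝ)+1)^p) hsum1
          rw [← hSpdef] at hps
          have : ∑ j ∈ Finset.range N, -(2 * (1/((j:ℝ)+1)^p))
              = -(2 * ∑ j ∈ Finset.range N, (1/((j:ℝ)+1)^p)) := by
            rw [Finset.sum_neg_distrib, Finset.mul_sum]
          rw [this]
          linarith
      _ = ∏ j ∈ Finset.range N, Real.exp (-(2 * (1/((j:ℝ)+1)^p))) := by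
          rw [← Real.exp_sum]
      _ ≤ ∏ j ∈ Finset.range N,
            x * ((j+1:ℕ):ℝ)^p / (x * ((j+1:ℕ):ℝ)^p + (1 + ε) * (ν (n+2))⁻¹ * Real.log ((n:ℝ)+2)) := by
          apply Finset.prod_le_prod (fun j _ => (Real.exp_pos _).le) (fun j _ => factor j)
  -- per-n integral bound
  have hint : ∀ n : ℕ, ENNReal.ofReal (c * (T n)^(-(α-1))) ≤
      ∫⁻ ω, ENNReal.ofReal (⨅ N : ℕ, ∏ j ∈ Finset.range N,
          R ω * ((j + 1 : ℕ) : ℝ) ^ p /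
            (R ω * ((j + 1 : ℕ) : ℝ) ^ p + (1 + ε) * (ν (n + 2))⁻¹ * Real.log ((n:ℝ) + 2)))
        ∂ℙ := by
    intro n
    set A := {ω : Ω | T n ≤ R ω} with hAdef
    have hA : MeasurableSet A := hRmeas measurableSet_Ici
    have hind : ∀ ω, A.indicator (fun _ => ENNReal.ofReal c) ω ≤
        ENNReal.ofReal (⨅ N : ℕ, ∏ j ∈ Finset.range N,
          R ω * ((j + 1 : ℕ) : ℝ) ^ p /
            (R ω * ((j + 1 : ℕ) : ℝ) ^ p + (1 + ε) * (ν (n + 2))⁻¹ * Real.log ((n:ℝ) + 2))) := by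
      intro ω
      by_cases hω : ω ∈ A
      · rw [Set.indicator_of_mem hω]
        exact ENNReal.ofReal_le_ofReal (hωbound n ω hω)
      · rw [Set.indicator_of_notMem hω]; exact zero_le
    have hPA : ENNReal.ofReal ((T n)^(-(α-1))) ≤ ℙ A := by
      have h1 := htail (T n) (hT1 n)
      calc ENNReal.ofReal ((T n)^(-(α-1))) ≤ ENNReal.ofReal ((ℙ A).toReal) :=
            ENNReal.ofReal_le_ofReal h1
        _ = ℙ A := ENNReal.ofReal_toReal (measure_ne_top _ _)
    calc ENNReal.ofReal (c * (T n)^(-(α-1)))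
        = ENNReal.ofReal c * ENNReal.ofReal ((T n)^(-(α-1))) :=
          ENNReal.ofReal_mul hc0.le
      _ ≤ ENNReal.ofReal c * ℙ A := mul_le_mul_right hPA _
      _ = ∫⁻ ω, A.indicator (fun _ => ENNReal.ofReal c) ω ∂ℙ :=
          (lintegral_indicator_const hA _).symm
      _ ≤ _ := lintegral_mono hind
  -- conclusion
  have htop : ∑' n : ℕ, ENNReal.ofReal (c * (T n)^(-(α-1))) = ⊤ := by
    by_contra h
    apply hdiv
    refine (ENNReal.summable_toReal h).congr fun n => ?_
    apply ENNReal.toReal_ofReal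
    positivity
  refine top_le_iff.mp ?_
  rw [← htop]
  exact ENNReal.tsum_le_tsum hint
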